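/- Let f : ℕ → ℝ, let (Δ f)(x) = f(x+1) − f(x), and let n, x be natural numbers. Then f(x) = ∑_{k=0}^{n} C(x, k) (Δ^k f)(0) + ∑_{r=0}^{x−1} C(x − r − 1, n) (Δ^{n+1} f)(r) (the Δ-calculus Bernoulli–Taylor formula with rest term of Cauchy type). -/

import Mathlib

/-- The forward difference operator. -/
def Dop : (ℕ → ℝ) → ℕ → ℝ := fun g y => g (y + 1) - g y

lemma Dop_shift (k : ℕ) : ∀ (g : ℕ → ℝ) (y : ℕ),
    (Dop^[k] (fun z => g (z + 1))) y = (Dop^[k] g) (y + 1) := by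
  induction k with
  | zero => intro g y; rfl
  | succ k ih =>
    intro g y
    rw [Function.iterate_succ_apply, Function.iterate_succ_apply]
    have h : Dop (fun z => g (z + 1)) = fun z => Dop g (z + 1) := rfl
    rw [h]
    exact ih _ y

lemma Dop_step (k : ℕ) (g : ℕ → ℝ) :
    (Dop^[k] g) 1 = (Dop^[k] g) 0 + (Dop^[k + 1] g) 0 := by
  rw [Function.iterate_succ_apply']
  show _ = _ + ((Dop^[k] g) 1 - (Dop^[k] g) 0)
  ring

lemma key_sum (x n : ℕ) (a : ℕ → ℝ) :
    ∑ k ∈ Finset.range (n + 1), (x.choose k : ℝ) * (a k + a (k + 1))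
      = ∑ k ∈ Finset.range (n + 1), ((x + 1).choose k : ℝ) * a k
        + (x.choose n : ℝ) * a (n + 1) := by
  have h1 : ∑ k ∈ Finset.range (n + 1), (x.choose k : ℝ) * (a k + a (k + 1))
      = ∑ k ∈ Finset.range (n + 1), (x.choose k : ℝ) * a k
        + ∑ k ∈ Finset.range (n + 1), (x.choose k : ℝ) * a (k + 1) := by
    rw [← Finset.sum_add_distrib]
    exact Finset.sum_congr rfl fun k _ => by ring
  rw [h1,
    Finset.sum_range_succ' (fun k => (x.choose k : ℝ) * a k) n,
    Finset.sum_range_succ (fun k => (x.choose k : ℝ) * a (k + 1)) n,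
    Finset.sum_range_succ' (fun k => ((x + 1).choose k : ℝ) * a k) n]
  simp only [Nat.choose_zero_right, Nat.cast_one, one_mul, Nat.choose_succ_succ,
    Nat.cast_add, Nat.succ_eq_add_one]
  have h3 : ∑ k ∈ Finset.range n, ((x.choose k : ℝ) + (x.choose (k + 1) : ℝ)) * a (k + 1)
      = ∑ k ∈ Finset.range n, (x.choose (k + 1) : ℝ) * a (k + 1)
        + ∑ k ∈ Finset.range n, (x.choose k : ℝ) * a (k + 1) := by
    rw [← Finset.sum_add_distrib]
    exact Finset.sum_congr rfl fun k _ => by ring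
  rw [h3]
  ring

lemma delta_bt_aux (n : ℕ) : ∀ (x : ℕ) (f : ℕ → ℝ),
    f x = ∑ k ∈ Finset.range (n + 1), (x.choose k : ℝ) * (Dop^[k] f) 0
      + ∑ r ∈ Finset.range x, ((x - r - 1).choose n : ℝ) * (Dop^[n + 1] f) r := by
  intro x
  induction x with
  | zero =>
    intro f
    rw [Finset.sum_range_zero, add_zero]
    rw [Finset.sum_eq_single 0]
    · simp
    · intro b _ hb
      simp [Nat.choose_eq_zero_of_lt (Nat.pos_of_ne_zero hb)]
    · simp
  | succ x ih =>
    intro f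
    have hIH := ih (fun z => f (z + 1))
    simp only [Dop_shift, zero_add] at hIH
    simp only [Dop_step] at hIH
    -- hIH : f (x+1) = ∑ k, C(x,k) * (a k + a (k+1)) + B
    have h2 : ∑ r ∈ Finset.range (x + 1),
        ((x + 1 - r - 1).choose n : ℝ) * (Dop^[n + 1] f) r
        = ∑ r ∈ Finset.range x, ((x - r - 1).choose n : ℝ) * (Dop^[n + 1] f) (r + 1)
          + (x.choose n : ℝ) * (Dop^[n + 1] f) 0 := by
    
      rw [Finset.sum_range_succ'
        (fun r => ((x + 1 - r - 1).choose n : ℝ) * (Dop^[n + 1] f) r) x]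
      have e0 : x + 1 - 0 - 1 = x := by omega
      rw [e0]
      congr 1
      refine Finset.sum_congr rfl fun r _ => ?_
      have : x + 1 - (r + 1) - 1 = x - r - 1 := by omega
      rw [this]
    have hk := key_sum x n (fun k => (Dop^[k] f) 0)
    rw [h2]
    rw [hIH]
    linarith [hk]

theorem delta_bernoulli_taylor (f : ℕ → ℝ) (n x : ℕ) :
    f x = ∑ k ∈ Finset.range (n + 1),
        (x.choose k : ℝ) * ((fun (g : ℕ → ℝ) => fun y => g (y + 1) - g y)^[k] f) 0
      + ∑ r ∈ Finset.range x,
        ((x - r - 1).choose n : ℝ)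
          * ((fun (g : ℕ → ℝ) => fun y => g (y + 1) - g y)^[n + 1] f) r := by
  exact delta_bt_aux n x f
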